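/- Jackson's formula: For every m×m complex matrix A and all x, y ∈ ℂ^m, the series Σ_{n=0}^∞ c_n, where c_n = Σ_{p,q ∈ ℕ^m, |p| = |q| = n} (x^p y^q / (p! q!)) · Per(A_{p,q}) (a finite sum for each n), converges to exp(x^T A y), where x^T A y = Σ_{i,j} x_i a_{ij} y_j. -/

import Mathlib

open BigOperators Matrix

/-- The list of row indices of `A_{p,·}`: each index `i` repeated `p i` times, in order. -/
def repList {m : ℕ} (p : Fin m → ℕ) : List (Fin m) :=
  (List.finRange m).flatMap fun i => List.replicate (p i) i

lemma repList_length {m : ℕ} (p : Fin m → ℕ) : (repList p).length = ∑ i, p i := by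
  simp only [repList, List.length_flatMap, Fin.sum_univ_def]
  congr 1
  apply List.map_congr_left
  intro i _
  simp

/-- The matrix `A_{p,q}`: row `i` repeated `p i` times, column `j` repeated `q j` times. -/
def repMat {m : ℕ} (A : Matrix (Fin m) (Fin m) ℂ) (p q : Fin m → ℕ) :
    Matrix (Fin (∑ i, p i)) (Fin (∑ j, q j)) ℂ :=
  Matrix.of fun r c =>
    A ((repList p).get (Fin.cast (repList_length p).symm r))
      ((repList q).get (Fin.cast (repList_length q).symm c))

/-- `Per(A_{p,q})`; by convention `0` when the matrix is not square. -/
noncomputable def perRep {m : ℕ} (A : Matrix (Fin m) (Fin m) ℂ) (p q : Fin m → ℕ) : ℂ :=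
  if h : (∑ i, p i) = (∑ j, q j) then
    (Matrix.of fun r c : Fin (∑ i, p i) => repMat A p q r (Fin.cast h c)).permanent
  else 0



section aux
open Finset
lemma count_repList {m : ℕ} (p : Fin m → ℕ) (i : Fin m) : (repList p).count i = p i := by
  classical
  simp only [repList, List.count_flatMap, Function.comp_def, List.count_replicate]
  rw [← Fin.sum_univ_def]
  simp [beq_iff_eq]

lemma card_filter_get {α : Type*} [DecidableEq α] (l : List α) (a : α) :
    (Finset.univ.filter fun k : Fin l.length => l.get k = a).card = l.count a := by
  induction l with
  | nil => simp
  | cons b t ih =>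
    rw [Finset.card_filter] at *
    show (∑ i : Fin (t.length + 1), if (b :: t).get i = a then 1 else 0) = _
    rw [Fin.sum_univ_succ, List.count_cons, ← ih]
    simp [add_comm]
    congr

/-- the row-selection function of `A_{p,·}` -/
def lfun {m : ℕ} (p : Fin m → ℕ) (k : Fin (∑ i, p i)) : Fin m :=
  (repList p).get (Fin.cast (repList_length p).symm k)

lemma card_fiber_lfun {m : ℕ} (p : Fin m → ℕ) (i : Fin m) :
    (Finset.univ.filter fun k => lfun p k = i).card = p i := by
  rw [← count_repList p i, ← card_filter_get, Finset.card_filter, Finset.card_filter]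
  exact Fintype.sum_equiv (finCongr (repList_length p).symm)
    (fun k => if lfun p k = i then 1 else 0)
    (fun k => if (repList p).get k = i then 1 else 0) (fun k => rfl)

lemma prod_lfun {m : ℕ} (p : Fin m → ℕ) (F : Fin m → ℂ) :
    ∏ k, F (lfun p k) = ∏ i, F i ^ p i := by
  rw [← Finset.prod_fiberwise Finset.univ (fun k => lfun p k) (fun k => F (lfun p k))]
  refine Finset.prod_congr rfl fun i _ => ?_
  rw [Finset.prod_congr rfl (fun k hk => by rw [(Finset.mem_filter.mp hk).2]),
    Finset.prod_const, card_fiber_lfun]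

def permFiberEquiv {n m : ℕ} (K g : Fin n → Fin m) :
    {σ : Equiv.Perm (Fin n) // K ∘ σ = g} ≃ (∀ j, {k // g k = j} ≃ {k // K k = j}) where
  toFun σ j := σ.1.subtypeEquiv fun k => by
    rw [show K (σ.1 k) = g k from congrFun σ.2 k]
  invFun e := ⟨Equiv.ofFiberEquiv e, funext fun k => Equiv.ofFiberEquiv_map e k⟩
  left_inv σ := Subtype.ext (Equiv.ext fun a => rfl)
  right_inv e := by
    funext j
    apply Equiv.ext
    rintro ⟨k, hk⟩
    subst hk
    apply Subtype.ext
    rfl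

lemma card_perm_fiber {n m : ℕ} (K g : Fin n → Fin m) :
    (Finset.univ.filter fun σ : Equiv.Perm (Fin n) => K ∘ σ = g).card =
      if ∀ j, (Finset.univ.filter fun k => g k = j).card =
          (Finset.univ.filter fun k => K k = j).card
      then ∏ j : Fin m, Nat.factorial (Finset.univ.filter fun k => K k = j).card else 0 := by
  classical
  rw [← Fintype.card_subtype, Fintype.card_congr (permFiberEquiv K g), Fintype.card_pi]
  split_ifs with h
  · refine Finset.prod_congr rfl fun j _ => ?_
    rw [Fintype.card_equiv (Fintype.equivOfCardEq (by
      rw [Fintype.card_subtype, Fintype.card_subtype]; exact h j)), Fintype.card_subtype, h j]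
  · push_neg at h
    obtain ⟨j, hj⟩ := h
    apply Finset.prod_eq_zero (Finset.mem_univ j)
    rw [Fintype.card_eq_zero_iff]
    exact ⟨fun e => hj (by rw [← Fintype.card_subtype, ← Fintype.card_subtype,
      Fintype.card_congr e])⟩

section
variable {N m : ℕ}

lemma prod_eq_pow_card (f : Fin N → Fin m) (c : Fin m → ℕ)
    (hc : ∀ j, (Finset.univ.filter fun k => f k = j).card = c j) (F : Fin m → ℂ) :
    ∏ k, F (f k) = ∏ j, F j ^ c j := by
  rw [← Finset.prod_fiberwise Finset.univ f (fun k => F (f k))]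
  refine Finset.prod_congr rfl fun j _ => ?_
  rw [Finset.prod_congr rfl (fun k hk => by rw [(Finset.mem_filter.mp hk).2]),
    Finset.prod_const, hc]

lemma sum_count (f : Fin N → Fin m) :
    ∑ j, (Finset.univ.filter fun k => f k = j).card = N := by
  rw [← Finset.card_eq_sum_card_fiberwise (f := f) (s := Finset.univ) (t := Finset.univ)
    (fun x _ => Finset.mem_univ _)]
  simp

lemma perm_group_sum (K : Fin N → Fin m) (Φ : Fin N → Fin m → ℂ) :
    ∑ σ : Equiv.Perm (Fin N), ∏ k, Φ k (K (σ k)) =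
      ∑ g : Fin N → Fin m,
        ((Finset.univ.filter fun σ : Equiv.Perm (Fin N) => K ∘ σ = g).card : ℂ) *
          ∏ k, Φ k (g k) := by
  classical
  rw [← Finset.sum_fiberwise Finset.univ (fun σ : Equiv.Perm (Fin N) => K ∘ σ)
    (fun σ => ∏ k, Φ k (K (σ k)))]
  refine Finset.sum_congr rfl fun g _ => ?_
  rw [Finset.sum_congr rfl (fun σ hσ => ?_), Finset.sum_const, nsmul_eq_mul]
  have := (Finset.mem_filter.mp hσ).2
  exact Finset.prod_congr rfl fun k _ => by rw [show K (σ k) = g k from congrFun this k]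
end


set_option maxHeartbeats 1000000 in
lemma q_sum {m : ℕ} (A : Matrix (Fin m) (Fin m) ℂ) (y : Fin m → ℂ) (p : Fin m → ℕ) :
    ∑ q ∈ Finset.Nat.antidiagonalTuple m (∑ i, p i),
      (∏ j, y j ^ q j) / (∏ j, (Nat.factorial (q j) : ℂ)) * perRep A p q
    = ∏ i, (∑ j, A i j * y j) ^ p i := by
  classical
  have step : ∀ q ∈ Finset.Nat.antidiagonalTuple m (∑ i, p i),
      (∏ j, y j ^ q j) / (∏ j, (Nat.factorial (q j) : ℂ)) * perRep A p q
      = ∑ g : Fin (∑ i, p i) → Fin m,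
          (if ∀ j, (Finset.univ.filter fun k => g k = j).card = q j then (1:ℂ) else 0) *
            ∏ k, (A (lfun p k) (g k) * y (g k)) := by
    intro q hq
    have hq' : ∑ j, q j = ∑ i, p i := Finset.Nat.mem_antidiagonalTuple.mp hq
    have h : (∑ i, p i) = (∑ j, q j) := hq'.symm
    set K : Fin (∑ i, p i) → Fin m := fun k => lfun q (Fin.cast h k) with hK
    have hKc : ∀ j, (Finset.univ.filter fun k => K k = j).card = q j := by
      intro j
      rw [← card_fiber_lfun q j, Finset.card_filter, Finset.card_filter]
      exact Fintype.sum_equiv (finCongr h)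
        (fun k => if K k = j then 1 else 0)
        (fun k => if lfun q k = j then 1 else 0) (fun k => rfl)
    have hper : perRep A p q =
        ∑ σ : Equiv.Perm (Fin (∑ i, p i)), ∏ k, A (lfun p (σ k)) (K k) := by
      rw [perRep, dif_pos h]; rfl
    have hy : (∏ j, y j ^ q j) = ∏ k, y (K k) := (prod_eq_pow_card K q hKc y).symm
    have reindex : ∀ σ : Equiv.Perm (Fin (∑ i, p i)),
        ∏ k, A (lfun p (σ k)) (K k) = ∏ k, A (lfun p k) (K (σ.symm k)) := by
      intro σ
      rw [← Equiv.prod_comp σ (fun k => A (lfun p k) (K (σ.symm k)))]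
      exact Finset.prod_congr rfl fun k _ => by rw [Equiv.symm_apply_apply]
    have key : (∏ j, y j ^ q j) * perRep A p q =
        ∑ σ : Equiv.Perm (Fin (∑ i, p i)),
          ∏ k, (A (lfun p k) (K (σ k)) * y (K (σ k))) := by
      rw [hper, Finset.mul_sum]
      have e1 : ∀ σ : Equiv.Perm (Fin (∑ i, p i)),
          (∏ j, y j ^ q j) * ∏ k, A (lfun p (σ k)) (K k) =
          ∏ k, (A (lfun p k) (K (σ.symm k)) * y (K (σ.symm k))) := by
        intro σ
        rw [Finset.prod_mul_distrib, reindex σ,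
          Equiv.prod_comp σ.symm (fun k => y (K k)), ← hy, mul_comm]
      rw [Finset.sum_congr rfl (fun σ _ => e1 σ)]
      exact Fintype.sum_equiv (Equiv.inv (Equiv.Perm (Fin (∑ i, p i))))
        (fun σ => ∏ k, (A (lfun p k) (K (σ.symm k)) * y (K (σ.symm k))))
        (fun σ => ∏ k, (A (lfun p k) (K (σ k)) * y (K (σ k)))) (fun σ => rfl)
    rw [div_mul_eq_mul_div, div_eq_inv_mul, key,
      perm_group_sum K (fun k j => A (lfun p k) j * y j), Finset.mul_sum]
    refine Finset.sum_congr rfl fun g _ => ?_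
    rw [card_perm_fiber]
    simp only [hKc]
    rw [← mul_assoc]
    congr 1
    split_ifs with hcond
    · rw [Nat.cast_prod]
      rw [show ∏ j, ((Nat.factorial (q j) : ℕ) : ℂ) = ∏ j, (Nat.factorial (q j) : ℂ) from rfl]
      rw [inv_mul_eq_div, div_eq_one_iff_eq]
      exact Finset.prod_ne_zero_iff.mpr fun j _ =>
        Nat.cast_ne_zero.mpr (Nat.factorial_ne_zero _)
    · simp
  rw [Finset.sum_congr rfl step, Finset.sum_comm]
  have collapse : ∀ g : Fin (∑ i, p i) → Fin m,
      (∑ q ∈ Finset.Nat.antidiagonalTuple m (∑ i, p i),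
        (if ∀ j, (Finset.univ.filter fun k => g k = j).card = q j then (1:ℂ) else 0)) = 1 := by
    intro g
    rw [Finset.sum_congr rfl (fun q (_ : q ∈ _) => if_congr
      (funext_iff (f := fun j => (Finset.univ.filter fun k => g k = j).card) (g := q)).symm
      rfl rfl)]
    rw [Finset.sum_ite_eq (Finset.Nat.antidiagonalTuple m (∑ i, p i))
      (fun j => (Finset.univ.filter fun k => g k = j).card) (fun _ => (1:ℂ))]
    rw [if_pos]
    rw [Finset.Nat.mem_antidiagonalTuple]
    exact sum_count g
  calc ∑ g : Fin (∑ i, p i) → Fin m, ∑ q ∈ Finset.Nat.antidiagonalTuple m (∑ i, p i),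
        (if ∀ j, (Finset.univ.filter fun k => g k = j).card = q j then (1:ℂ) else 0) *
          ∏ k, (A (lfun p k) (g k) * y (g k))
      = ∑ g : Fin (∑ i, p i) → Fin m, ∏ k, (A (lfun p k) (g k) * y (g k)) := by
        refine Finset.sum_congr rfl fun g _ => ?_
        rw [← Finset.sum_mul, collapse g, one_mul]
    _ = ∏ k, ∑ j, (A (lfun p k) j * y j) := by
        rw [Finset.prod_univ_sum]
        simp
    _ = ∏ i, (∑ j, A i j * y j) ^ p i := prod_lfun p (fun i => ∑ j, A i j * y j)

lemma n_term {m : ℕ} (A : Matrix (Fin m) (Fin m) ℂ) (x y : Fin m → ℂ) (n : ℕ) :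
    ∑ p ∈ Finset.Nat.antidiagonalTuple m n,
      ∑ q ∈ Finset.Nat.antidiagonalTuple m n,
        (∏ i, x i ^ p i) * (∏ j, y j ^ q j) /
            ((∏ i, (Nat.factorial (p i) : ℂ)) * ∏ j, (Nat.factorial (q j) : ℂ)) *
          perRep A p q
    = (∑ i, ∑ j, x i * A i j * y j) ^ n / (Nat.factorial n : ℂ) := by
  classical
  set w : Fin m → ℂ := fun i => ∑ j, A i j * y j with hw
  have hS : (∑ i, ∑ j, x i * A i j * y j) = ∑ i, x i * w i := by
    simp [hw, Finset.mul_sum, mul_assoc]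
  have lhs : ∀ p ∈ Finset.Nat.antidiagonalTuple m n,
      (∑ q ∈ Finset.Nat.antidiagonalTuple m n,
        (∏ i, x i ^ p i) * (∏ j, y j ^ q j) /
            ((∏ i, (Nat.factorial (p i) : ℂ)) * ∏ j, (Nat.factorial (q j) : ℂ)) *
          perRep A p q)
      = (∏ i, x i ^ p i) / (∏ i, (Nat.factorial (p i) : ℂ)) * ∏ i, w i ^ p i := by
    intro p hp
    have hp' : ∑ i, p i = n := Finset.Nat.mem_antidiagonalTuple.mp hp
    rw [Finset.sum_congr rfl (fun q _ => show
        (∏ i, x i ^ p i) * (∏ j, y j ^ q j) /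
            ((∏ i, (Nat.factorial (p i) : ℂ)) * ∏ j, (Nat.factorial (q j) : ℂ)) *
          perRep A p q
        = (∏ i, x i ^ p i) / (∏ i, (Nat.factorial (p i) : ℂ)) *
            ((∏ j, y j ^ q j) / (∏ j, (Nat.factorial (q j) : ℂ)) * perRep A p q) by ring),
      ← Finset.mul_sum, ← hp', q_sum A y p]
  rw [Finset.sum_congr rfl lhs, hS, Finset.sum_pow_eq_sum_piAntidiag,
    Finset.piAntidiag_univ_fin_eq_antidiagonalTuple, Finset.sum_div]
  refine Finset.sum_congr rfl fun p hp => Eq.symm ?_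
  have hp' : ∑ i, p i = n := Finset.Nat.mem_antidiagonalTuple.mp hp
  have spec := Nat.multinomial_spec Finset.univ p
  rw [hp'] at spec
  have specC : (∏ i, (Nat.factorial (p i) : ℂ)) * (Nat.multinomial Finset.univ p : ℂ)
      = (Nat.factorial n : ℂ) := by
    rw [← Nat.cast_prod, ← Nat.cast_mul, spec]
  have hfac : (∏ i, (Nat.factorial (p i) : ℂ)) ≠ 0 :=
    Finset.prod_ne_zero_iff.mpr fun j _ => Nat.cast_ne_zero.mpr (Nat.factorial_ne_zero _)
  have hmult : (Nat.multinomial Finset.univ p : ℂ) ≠ 0 :=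
    Nat.cast_ne_zero.mpr (Nat.multinomial_pos _ _).ne'
  have hdiv : (Nat.multinomial Finset.univ p : ℂ) / (Nat.factorial n : ℂ)
      = (∏ i, (Nat.factorial (p i) : ℂ))⁻¹ := by
    rw [← specC]
    field_simp
  calc (Nat.multinomial Finset.univ p : ℂ) * (∏ i, (x i * w i) ^ p i) / (Nat.factorial n : ℂ)
      = ((Nat.multinomial Finset.univ p : ℂ) / (Nat.factorial n : ℂ)) *
          ((∏ i, x i ^ p i) * ∏ i, w i ^ p i) := by
        rw [← Finset.prod_mul_distrib]
        simp_rw [mul_pow]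
        ring
    _ = (∏ i, x i ^ p i) / (∏ i, (Nat.factorial (p i) : ℂ)) * ∏ i, w i ^ p i := by
        rw [hdiv]; ring
end aux

/-- **Jackson's formula.** -/
theorem jackson_formula (m : ℕ) (A : Matrix (Fin m) (Fin m) ℂ) (x y : Fin m → ℂ) :
    Filter.Tendsto
      (fun N => ∑ n ∈ Finset.range N,
        ∑ p ∈ Finset.Nat.antidiagonalTuple m n,
          ∑ q ∈ Finset.Nat.antidiagonalTuple m n,
            (∏ i, x i ^ p i) * (∏ j, y j ^ q j) /
                ((∏ i, (Nat.factorial (p i) : ℂ)) * ∏ j, (Nat.factorial (q j) : ℂ)) *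
              perRep A p q)
      Filter.atTop
      (nhds (Complex.exp (∑ i, ∑ j, x i * A i j * y j))) := by
  have h1 :
      (fun N => ∑ n ∈ Finset.range N,
        ∑ p ∈ Finset.Nat.antidiagonalTuple m n,
          ∑ q ∈ Finset.Nat.antidiagonalTuple m n,
            (∏ i, x i ^ p i) * (∏ j, y j ^ q j) /
                ((∏ i, (Nat.factorial (p i) : ℂ)) * ∏ j, (Nat.factorial (q j) : ℂ)) *
              perRep A p q)
      = fun N => ∑ n ∈ Finset.range N,
          (∑ i, ∑ j, x i * A i j * y j) ^ n / (Nat.factorial n : ℂ) := by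
    funext N
    exact Finset.sum_congr rfl fun n _ => n_term A x y n
  rw [h1, Complex.exp_eq_exp_ℂ]
  exact (NormedSpace.expSeries_div_hasSum_exp (𝔸 := ℂ)
    (∑ i, ∑ j, x i * A i j * y j)).tendsto_sum_nat
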